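/- Let G be an infinite primitive permutation group on a countably infinite set V with all suborbits finite. Then G has distinguishing number 2, i.e., there exists a subset Y of V whose setwise stabilizer in G is trivial. -/

import Mathlib

open Pointwise

def IsPrimitiveAction (G V : Type*) [Group G] [MulAction G V] : Prop :=
  (∀ u v : V, ∃ g : G, g • u = v) ∧
  ∀ r : V → V → Prop, Equivalence r →
    (∀ (g : G) (x y : V), r x y → r (g • x) (g • y)) →
    (∀ x y : V, r x y → x = y) ∨ (∀ x y : V, r x y)

namespace Stmt16Aux

open SimpleGraph

variable {G V : Type*} [Group G] [MulAction G V]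

/-- The symmetrized orbital graph determined by the pair `(a, b)`. -/
def gr (G : Type*) {V : Type*} [Group G] [MulAction G V] (a b : V) : SimpleGraph V where
  Adj u v := u ≠ v ∧ ∃ g : G, (g • a = u ∧ g • b = v) ∨ (g • a = v ∧ g • b = u)
  symm := ⟨fun u v (h : u ≠ v ∧ ∃ g : G, (g • a = u ∧ g • b = v) ∨ (g • a = v ∧ g • b = u)) =>
    ⟨h.1.symm, let ⟨g, h2⟩ := h.2; ⟨g, h2.symm⟩⟩⟩
  loopless := ⟨fun u (h : u ≠ u ∧ ∃ g : G, (g • a = u ∧ g • b = u) ∨ (g • a = u ∧ g • b = u)) =>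
    h.1 rfl⟩

lemma adj_smul (a b : V) (g : G) {u v : V} (h : (gr G a b).Adj u v) :
    (gr G a b).Adj (g • u) (g • v) := by
  obtain ⟨h1, k, hk⟩ := h
  refine ⟨fun he => h1 (smul_left_cancel g he), g * k, ?_⟩
  rcases hk with ⟨e1, e2⟩ | ⟨e1, e2⟩
  · exact Or.inl ⟨by rw [mul_smul, e1], by rw [mul_smul, e2]⟩
  · exact Or.inr ⟨by rw [mul_smul, e1], by rw [mul_smul, e2]⟩

/-- The action of `g` as a graph homomorphism. -/
def homOf (a b : V) (g : G) : gr G a b →g gr G a b :=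
  ⟨fun v => g • v, fun h => adj_smul a b g h⟩

@[simp] lemma homOf_apply (a b : V) (g : G) (v : V) : homOf a b g v = g • v := rfl

lemma conn (hprim : IsPrimitiveAction G V) {a b : V} (hab : a ≠ b) :
    (gr G a b).Preconnected := by
  rcases hprim.2 (gr G a b).Reachable
      ⟨fun x => Reachable.refl x, fun h => h.symm, fun h h' => h.trans h'⟩
      (fun g x y h => by simpa using h.map (homOf a b g)) with h | h
  · exact absurd
      (h a b (SimpleGraph.Adj.reachable ⟨hab, 1, Or.inl ⟨one_smul _ _, one_smul _ _⟩⟩)) hab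
  · exact h

lemma dist_le_smul (hprim : IsPrimitiveAction G V) {a b : V} (hab : a ≠ b) (g : G) (u v : V) :
    (gr G a b).dist (g • u) (g • v) ≤ (gr G a b).dist u v := by
  obtain ⟨p, hp⟩ := (conn hprim hab u v).exists_walk_length_eq_dist
  have h1 := SimpleGraph.dist_le (p.map (homOf a b g))
  rw [SimpleGraph.Walk.length_map] at h1
  simpa [hp] using h1

lemma dist_smul (hprim : IsPrimitiveAction G V) {a b : V} (hab : a ≠ b) (g : G) (u v : V) :
    (gr G a b).dist (g • u) (g • v) = (gr G a b).dist u v := by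
  refine le_antisymm (dist_le_smul hprim hab g u v) ?_
  have := dist_le_smul hprim hab g⁻¹ (g • u) (g • v)
  simpa using this

lemma nbr_fin (hprim : IsPrimitiveAction G V)
    (hsub : ∀ α β : V, (MulAction.orbit (MulAction.stabilizer G α) β).Finite)
    (a b x : V) : {v | (gr G a b).Adj x v}.Finite := by
  obtain ⟨h1, hh1⟩ := hprim.1 a x
  obtain ⟨h2, hh2⟩ := hprim.1 b x
  have hA : ((h1 • ·) '' (MulAction.orbit (MulAction.stabilizer G a) b)).Finite :=
    (hsub a b).image _
  have hB : ((h2 • ·) '' (MulAction.orbit (MulAction.stabilizer G b) a)).Finite :=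
    (hsub b a).image _
  apply (hA.union hB).subset
  rintro v ⟨hne, g, ⟨e1, e2⟩ | ⟨e1, e2⟩⟩
  · left
    refine ⟨(h1⁻¹ * g) • b, ⟨⟨h1⁻¹ * g, ?_⟩, rfl⟩, ?_⟩
    · rw [MulAction.mem_stabilizer_iff, mul_smul, e1, ← hh1, inv_smul_smul]
    · show h1 • (h1⁻¹ * g) • b = v
      rw [← mul_smul, mul_inv_cancel_left, e2]
  · right
    refine ⟨(h2⁻¹ * g) • a, ⟨⟨h2⁻¹ * g, ?_⟩, rfl⟩, ?_⟩
    · rw [MulAction.mem_stabilizer_iff, mul_smul, e2, ← hh2, inv_smul_smul]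
    · show h2 • (h2⁻¹ * g) • a = v
      rw [← mul_smul, mul_inv_cancel_left, e1]

lemma ball_fin (hprim : IsPrimitiveAction G V)
    (hsub : ∀ α β : V, (MulAction.orbit (MulAction.stabilizer G α) β).Finite)
    {a b : V} (hab : a ≠ b) (x : V) :
    ∀ n : ℕ, {v | (gr G a b).dist x v ≤ n}.Finite := by
  intro n
  induction n with
  | zero =>
    apply Set.Finite.subset (Set.finite_singleton x)
    intro v hv
    have h0 : (gr G a b).dist x v = 0 := Nat.le_zero.mp hv
    have := ((conn hprim hab x v).dist_eq_zero_iff).mp h0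
    simp [this.symm]
  | succ n ih =>
    refine ((ih.union (ih.biUnion (fun u _ => nbr_fin hprim hsub a b u)))).subset ?_
    intro v hv
    rcases Nat.lt_or_ge ((gr G a b).dist x v) (n+1) with hlt | hge
    · exact Or.inl (Nat.lt_succ_iff.mp hlt)
    have hd : (gr G a b).dist x v = n + 1 := le_antisymm hv hge
    have hvx : v ≠ x := by
      intro h
      rw [h, SimpleGraph.dist_self] at hd
      omega
    obtain ⟨p, hp⟩ := (conn hprim hab x v).exists_walk_length_eq_dist
    obtain ⟨u, hadj, q, hq⟩ := SimpleGraph.Walk.exists_eq_cons_of_ne hvx p.reverse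
    have hlen : q.length = n := by
      have h2 := SimpleGraph.Walk.length_reverse p
      rw [hq] at h2
      simp only [SimpleGraph.Walk.length_cons] at h2
      rw [hp, hd] at h2
      omega
    right
    refine Set.mem_biUnion (x := u) ?_ ?_
    · have := SimpleGraph.dist_le q
      rw [hlen] at this
      exact le_trans (le_of_eq (SimpleGraph.dist_comm)) this
    · exact Set.mem_setOf.mpr hadj.symm

lemma sphere_fin (hprim : IsPrimitiveAction G V)
    (hsub : ∀ α β : V, (MulAction.orbit (MulAction.stabilizer G α) β).Finite)
    {a b : V} (hab : a ≠ b) (x : V) (k : ℕ) :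
    {u | (gr G a b).dist u x = k}.Finite := by
  apply (ball_fin hprim hsub hab x k).subset
  intro u hu
  simp only [Set.mem_setOf_eq] at hu ⊢
  rw [SimpleGraph.dist_comm]
  exact le_of_eq hu

/-- Key lemma: for distinct `x y`, infinitely many `v` satisfy `d(v,x) ≠ d(v,y)`. -/
lemma exc_inf [Infinite V] (hprim : IsPrimitiveAction G V)
    (hsub : ∀ α β : V, (MulAction.orbit (MulAction.stabilizer G α) β).Finite)
    {a b : V} (hab : a ≠ b) :
    ∀ x y : V, x ≠ y → {v | (gr G a b).dist v x ≠ (gr G a b).dist v y}.Infinite := by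
  set Γ := gr G a b with hΓ
  set r : V → V → Prop := fun x y => {v | Γ.dist v x ≠ Γ.dist v y}.Finite with hr
  have hequiv : Equivalence r := by
    constructor
    · intro x
      have : {v | Γ.dist v x ≠ Γ.dist v x} = ∅ := by
        ext v; simp
      rw [hr]; simp only [this]; exact Set.finite_empty
    · intro x y h
      apply h.subset
      intro v hv
      exact fun he => hv he.symm
    · intro x y z hxy hyz
      apply (hxy.union hyz).subset
      intro v hv
      by_contra hc
      try push_neg at hc
      simp only [Set.mem_setOf_eq, Set.mem_union] at hc hv
      push_neg at hc
      exact hv (hc.1.trans hc.2)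
  have hinv : ∀ (g : G) (x y : V), r x y → r (g • x) (g • y) := by
    intro g x y h
    apply (h.image (g • ·)).subset
    intro v hv
    refine ⟨g⁻¹ • v, ?_, smul_inv_smul g v⟩
    simp only [Set.mem_setOf_eq] at hv ⊢
    intro he
    apply hv
    have e1 : Γ.dist v (g • x) = Γ.dist (g⁻¹ • v) x := by
      conv_lhs => rw [← smul_inv_smul g v]
      exact dist_smul hprim hab g (g⁻¹ • v) x
    have e2 : Γ.dist v (g • y) = Γ.dist (g⁻¹ • v) y := by
      conv_lhs => rw [← smul_inv_smul g v]
      exact dist_smul hprim hab g (g⁻¹ • v) y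
    rw [e1, e2, he]
  rcases hprim.2 r hequiv hinv with htriv | hfull
  · intro x y hxy hfin
    exact hxy (htriv x y hfin)
  · exfalso
    have hcov : (Set.univ : Set V) ⊆
        {a} ∪ ⋃ w ∈ {w | Γ.Adj a w}, {v | Γ.dist v a ≠ Γ.dist v w} := by
      intro v _
      by_cases hva : v = a
      · exact Or.inl (by simp [hva])
      have hvapos : Γ.dist a v ≠ 0 := by
        intro h0
        exact hva (((conn hprim hab a v).dist_eq_zero_iff.mp h0)).symm
      obtain ⟨p, hp⟩ := (conn hprim hab a v).exists_walk_length_eq_dist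
      obtain ⟨w, hadj, q, hq⟩ :=
        SimpleGraph.Walk.exists_eq_cons_of_ne (fun h => hvapos (by rw [h, SimpleGraph.dist_self])) p
      have hlen : q.length + 1 = Γ.dist a v := by
        rw [← hp, hq]; simp
      right
      refine Set.mem_biUnion (Set.mem_setOf.mpr hadj) ?_
      simp only [Set.mem_setOf_eq]
      have h1 : Γ.dist v w ≤ q.length := by
        rw [SimpleGraph.dist_comm]
        exact SimpleGraph.dist_le q
      have h2 : Γ.dist v a = q.length + 1 := by
        rw [SimpleGraph.dist_comm]; omega
      omega
    have hfin : ({a} ∪ ⋃ w ∈ {w | Γ.Adj a w}, {v | Γ.dist v a ≠ Γ.dist v w} :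
        Set V).Finite := by
      refine (Set.finite_singleton a).union ?_
      exact Set.Finite.biUnion (nbr_fin hprim hsub a b a) (fun w _ => hfull a w)
    exact Set.infinite_univ (hfin.subset hcov)

lemma main [FaithfulSMul G V] [Countable V] [Infinite V]
    (hprim : IsPrimitiveAction G V)
    (hsub : ∀ α β : V, (MulAction.orbit (MulAction.stabilizer G α) β).Finite) :
    ∃ Y : Set V, ∀ g : G, g • Y = Y → g = 1 := by
  classical
  obtain ⟨a, b, hab⟩ := exists_pair_ne V
  set Γ := gr G a b with hGam
  have hd : ∀ (g : G) (u v : V), Γ.dist (g • u) (g • v) = Γ.dist u v :=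
    fun g u v => dist_smul hprim hab g u v
  have hsph : ∀ (x : V) (k : ℕ), {u | Γ.dist u x = k}.Finite :=
    fun x k => sphere_fin hprim hsub hab x k
  have hexc := exc_inf hprim hsub hab
  -- one-step extension of a finite partial coloring, breaking all g with g • x = y
  have stepEx : ∀ (p : V → Option Bool), {u | p u ≠ none}.Finite → ∀ x y : V,
      ∃ q : V → Option Bool, ({u | q u ≠ none}.Finite) ∧
        (∀ u c, p u = some c → q u = some c) ∧
        (x ≠ y → ∃ k : ℕ,
          (∀ u, Γ.dist u x = k → q u ≠ none) ∧
          (∀ u, Γ.dist u y = k → q u ≠ none) ∧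
          {u | Γ.dist u x = k ∧ q u = some true}.ncard ≠
            {u | Γ.dist u y = k ∧ q u = some true}.ncard) := by
    intro p hp x y
    by_cases hxy : x = y
    · exact ⟨p, hp, fun u c h => h, fun h => absurd hxy h⟩
    obtain ⟨v, hv⟩ := ((hexc x y hxy).diff hp).nonempty
    obtain ⟨hvd, hvnone⟩ := hv
    simp only [Set.mem_setOf_eq] at hvd
    have hpv : p v = none := by
      by_contra h
      exact hvnone h
    set k := Γ.dist v x with hk
    have hvS : Γ.dist v x = k := rfl
    have hvT : ¬ (Γ.dist v y = k) := fun h => hvd (hvS.trans h.symm)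
    set aS := {u | Γ.dist u x = k ∧ p u = some true}.ncard with haS
    set bT := {u | Γ.dist u y = k ∧ p u = some true}.ncard with hbT
    set val : Bool := if aS = bT then true else false with hval
    set q : V → Option Bool := fun u =>
      if p u = none then
        (if u = v then some val
         else if Γ.dist u x = k ∨ Γ.dist u y = k then some false else none)
      else p u
      with hq
    have hq_of_p : ∀ u c, p u = some c → q u = some c := by
      intro u c h
      simp only [hq, h]
      simp
    have hq_eval_none : ∀ u, p u = none → q u =
        (if u = v then some val
         else if Γ.dist u x = k ∨ Γ.dist u y = k then some false else none) := by
      intro u h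
      simp only [hq, h]
      simp
    have hqv : q v = some val := by
      rw [hq_eval_none v hpv]
      simp
    have hbasefinS : {u | Γ.dist u x = k ∧ p u = some true}.Finite :=
      (hsph x k).subset (fun u hu => hu.1)
    have hfin : {u | q u ≠ none}.Finite := by
      refine (hp.union ((hsph x k).union (hsph y k))).subset ?_
      intro u hu
      simp only [Set.mem_setOf_eq] at hu
      by_cases hpu : p u = none
      · rw [hq_eval_none u hpu] at hu
        by_cases huv : u = v
        · exact Or.inr (Or.inl (by rw [huv]; exact hvS))
        · rw [if_neg huv] at hu
          by_cases hor : Γ.dist u x = k ∨ Γ.dist u y = k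
          · rcases hor with h | h
            · exact Or.inr (Or.inl h)
            · exact Or.inr (Or.inr h)
          · rw [if_neg hor] at hu
            exact absurd rfl hu
      · exact Or.inl hpu
    have hdecS : ∀ u, Γ.dist u x = k → q u ≠ none := by
      intro u hu hnone
      by_cases hpu : p u = none
      · rw [hq_eval_none u hpu] at hnone
        by_cases huv : u = v
        · rw [if_pos huv] at hnone; exact Option.some_ne_none _ hnone
        · rw [if_neg huv, if_pos (Or.inl hu)] at hnone
          exact Option.some_ne_none _ hnone
      · obtain ⟨c, hc⟩ := Option.ne_none_iff_exists'.mp hpu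
        rw [hq_of_p u c hc] at hnone
        exact Option.some_ne_none _ hnone
    have hdecT : ∀ u, Γ.dist u y = k → q u ≠ none := by
      intro u hu hnone
      by_cases hpu : p u = none
      · rw [hq_eval_none u hpu] at hnone
        by_cases huv : u = v
        · rw [if_pos huv] at hnone; exact Option.some_ne_none _ hnone
        · rw [if_neg huv, if_pos (Or.inr hu)] at hnone
          exact Option.some_ne_none _ hnone
      · obtain ⟨c, hc⟩ := Option.ne_none_iff_exists'.mp hpu
        rw [hq_of_p u c hc] at hnone
        exact Option.some_ne_none _ hnone
    have hTQ : {u | Γ.dist u y = k ∧ q u = some true} =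
        {u | Γ.dist u y = k ∧ p u = some true} := by
      ext u
      simp only [Set.mem_setOf_eq]
      constructor
      · rintro ⟨hu, hqu⟩
        refine ⟨hu, ?_⟩
        by_cases hpu : p u = none
        · exfalso
          have huv : u ≠ v := fun h => hvT (h ▸ hu)
          rw [hq_eval_none u hpu, if_neg huv, if_pos (Or.inr hu)] at hqu
          simp at hqu
        · obtain ⟨c, hc⟩ := Option.ne_none_iff_exists'.mp hpu
          rw [hq_of_p u c hc] at hqu
          rw [hc, hqu]
      · rintro ⟨hu, hpu⟩
        exact ⟨hu, hq_of_p u true hpu⟩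
    refine ⟨q, hfin, hq_of_p, fun _ => ⟨k, hdecS, hdecT, ?_⟩⟩
    by_cases hcase : aS = bT
    · have hvalt : val = true := by rw [hval, if_pos hcase]
      have hSQ : {u | Γ.dist u x = k ∧ q u = some true} =
          insert v {u | Γ.dist u x = k ∧ p u = some true} := by
        ext u
        simp only [Set.mem_setOf_eq, Set.mem_insert_iff]
        constructor
        · rintro ⟨hu, hqu⟩
          by_cases huv : u = v
          · exact Or.inl huv
          · right
            refine ⟨hu, ?_⟩
            by_cases hpu : p u = none
            · exfalso
              rw [hq_eval_none u hpu, if_neg huv, if_pos (Or.inl hu)] at hqu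
              simp at hqu
            · obtain ⟨c, hc⟩ := Option.ne_none_iff_exists'.mp hpu
              rw [hq_of_p u c hc] at hqu
              rw [hc, hqu]
        · rintro (rfl | ⟨hu, hpu⟩)
          · exact ⟨hvS, by rw [hqv, hvalt]⟩
          · exact ⟨hu, hq_of_p u true hpu⟩
      have hvnotmem : v ∉ {u | Γ.dist u x = k ∧ p u = some true} := by
        intro h
        simp only [Set.mem_setOf_eq, hpv] at h
        exact absurd h.2 (by simp)
      rw [hSQ, hTQ, Set.ncard_insert_of_notMem hvnotmem hbasefinS, ← haS, ← hbT, hcase]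
      omega
    · have hvalf : val = false := by rw [hval, if_neg hcase]
      have hSQ : {u | Γ.dist u x = k ∧ q u = some true} =
          {u | Γ.dist u x = k ∧ p u = some true} := by
        ext u
        simp only [Set.mem_setOf_eq]
        constructor
        · rintro ⟨hu, hqu⟩
          refine ⟨hu, ?_⟩
          by_cases huv : u = v
          · exfalso
            rw [huv, hqv, hvalf] at hqu
            simp at hqu
          · by_cases hpu : p u = none
            · exfalso
              rw [hq_eval_none u hpu, if_neg huv, if_pos (Or.inl hu)] at hqu
              simp at hqu
            · obtain ⟨c, hc⟩ := Option.ne_none_iff_exists'.mp hpu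
              rw [hq_of_p u c hc] at hqu
              rw [hc, hqu]
        · rintro ⟨hu, hpu⟩
          exact ⟨hu, hq_of_p u true hpu⟩
      rw [hSQ, hTQ, ← haS, ← hbT]
      exact hcase
  -- build the increasing sequence of partial colorings
  choose stepQ hQfin hQmono hQkill using stepEx
  obtain ⟨f, hf⟩ := exists_surjective_nat (V × V)
  obtain ⟨seq, hseqS⟩ :
      ∃ seq : ℕ → {c : V → Option Bool // {u | c u ≠ none}.Finite},
        ∀ n, seq (n+1) = ⟨stepQ (seq n).1 (seq n).2 (f n).1 (f n).2,
            hQfin (seq n).1 (seq n).2 (f n).1 (f n).2⟩ := by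
    refine ⟨fun n => Nat.rec ⟨fun _ => none, by simp⟩
      (fun m ih => ⟨stepQ ih.1 ih.2 (f m).1 (f m).2, hQfin ih.1 ih.2 (f m).1 (f m).2⟩) n,
      fun n => rfl⟩
  have hmono1 : ∀ n u c, (seq n).1 u = some c → (seq (n+1)).1 u = some c := by
    intro n u c h
    rw [hseqS n]
    exact hQmono (seq n).1 (seq n).2 (f n).1 (f n).2 u c h
  have hmono : ∀ m n, m ≤ n → ∀ u c, (seq m).1 u = some c → (seq n).1 u = some c := by
    intro m n hmn
    induction n, hmn using Nat.le_induction with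
    | base => exact fun u c h => h
    | succ n hmn ih => exact fun u c h => hmono1 n u c (ih u c h)
  have hcons : ∀ m n u c c', (seq m).1 u = some c → (seq n).1 u = some c' → c = c' := by
    intro m n u c c' hc hc'
    rcases le_total m n with h | h
    · have := hmono m n h u c hc
      rw [this] at hc'
      exact Option.some.inj hc'
    · have := hmono n m h u c' hc'
      rw [this] at hc
      exact (Option.some.inj hc).symm
  refine ⟨{u | ∃ n, (seq n).1 u = some true}, ?_⟩
  intro g hg
  by_contra hg1
  have hmov : ¬ ∀ w : V, g • w = w := by
    intro hall
    exact hg1 (eq_of_smul_eq_smul (fun w : V => (hall w).trans (one_smul G w).symm))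
  push_neg at hmov
  obtain ⟨x, hx⟩ := hmov
  have hxne : x ≠ g • x := fun h => hx h.symm
  obtain ⟨n, hn⟩ := hf (x, g • x)
  have h1 : (f n).1 = x := by rw [hn]
  have h2 : (f n).2 = g • x := by rw [hn]
  have hkill := hQkill (seq n).1 (seq n).2 (f n).1 (f n).2
  rw [h1, h2] at hkill
  have hqeq : (seq (n+1)).1 = stepQ (seq n).1 (seq n).2 x (g • x) := by
    have := congrArg Subtype.val (hseqS n)
    rw [h1, h2] at this
    exact this
  obtain ⟨k, hdS, hdT, hcard⟩ := hkill hxne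
  rw [← hqeq] at hdS hdT hcard
  set Y : Set V := {u | ∃ n, (seq n).1 u = some true} with hY
  have hset1 : {u | Γ.dist u x = k ∧ (seq (n+1)).1 u = some true} =
      {u | Γ.dist u x = k} ∩ Y := by
    ext u
    simp only [Set.mem_setOf_eq, Set.mem_inter_iff, hY]
    constructor
    · rintro ⟨h3, h4⟩
      exact ⟨h3, n+1, h4⟩
    · rintro ⟨h3, m, hm⟩
      refine ⟨h3, ?_⟩
      obtain ⟨c, hc⟩ := Option.ne_none_iff_exists'.mp (hdS u h3)
      rw [hc, hcons (n+1) m u c true hc hm]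
  have hset2 : {u | Γ.dist u (g • x) = k ∧ (seq (n+1)).1 u = some true} =
      {u | Γ.dist u (g • x) = k} ∩ Y := by
    ext u
    simp only [Set.mem_setOf_eq, Set.mem_inter_iff, hY]
    constructor
    · rintro ⟨h3, h4⟩
      exact ⟨h3, n+1, h4⟩
    · rintro ⟨h3, m, hm⟩
      refine ⟨h3, ?_⟩
      obtain ⟨c, hc⟩ := Option.ne_none_iff_exists'.mp (hdT u h3)
      rw [hc, hcons (n+1) m u c true hc hm]
  have himg : (g • ({u | Γ.dist u x = k} ∩ Y)) = {u | Γ.dist u (g • x) = k} ∩ Y := by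
    ext w
    rw [Set.mem_smul_set_iff_inv_smul_mem]
    simp only [Set.mem_inter_iff, Set.mem_setOf_eq]
    have hdist : Γ.dist (g⁻¹ • w) x = Γ.dist w (g • x) := by
      conv_rhs => rw [← smul_inv_smul g w]
      rw [hd g (g⁻¹ • w) x]
    have hmem : g⁻¹ • w ∈ Y ↔ w ∈ Y := by
      constructor
      · intro hw
        have : w ∈ g • Y := ⟨g⁻¹ • w, hw, smul_inv_smul g w⟩
        rwa [hg] at this
      · intro hw
        rw [← hg] at hw
        exact Set.mem_smul_set_iff_inv_smul_mem.mp hw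
    rw [hdist]
    exact and_congr Iff.rfl hmem
  have hcnt : ({u | Γ.dist u x = k} ∩ Y).ncard =
      ({u | Γ.dist u (g • x) = k} ∩ Y).ncard := by
    rw [← himg, ← Set.image_smul, Set.ncard_image_of_injective _ (MulAction.injective g)]
  rw [hset1, hset2] at hcard
  exact hcard hcnt

end Stmt16Aux

/-- An infinite primitive permutation group on a countably infinite set with all
suborbits finite has distinguishing number 2: some subset has trivial setwise
stabilizer. -/
theorem stmt16 {G V : Type*} [Group G] [MulAction G V] [FaithfulSMul G V]
    [Infinite G] [Countable V] [Infinite V]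
    (hprim : IsPrimitiveAction G V)
    (hsub : ∀ α β : V, (MulAction.orbit (MulAction.stabilizer G α) β).Finite) :
    ∃ Y : Set V, ∀ g : G, g • Y = Y → g = 1 :=
  Stmt16Aux.main hprim hsub
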